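/- The function μ ↦ ((1/(2μ))·log((1+μ)/(1−μ)))² is integrable on the open interval (0,1), and ∫₀¹ ((1/(2μ))·log((1+μ)/(1−μ)))² dμ = π²/6. -/

import Mathlib

open Real Set MeasureTheory Filter

noncomputable def Faux (n : ℕ) (t : ℝ) : ℝ :=
  t^(n+1) * (Real.log t^2/((n:ℝ)+1) - 2*Real.log t/((n:ℝ)+1)^2 + 2/((n:ℝ)+1)^3)

lemma Faux_zero (n : ℕ) : Faux n 0 = 0 := by simp [Faux]

lemma Faux_one (n : ℕ) : Faux n 1 = 2/((n:ℝ)+1)^3 := by simp [Faux]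

lemma Faux_deriv (n : ℕ) {t : ℝ} (ht : 0 < t) :
    HasDerivAt (Faux n) (t^n * Real.log t^2) t := by
  have h1 : HasDerivAt (fun t : ℝ => t^(n+1)) (((n:ℕ)+1 : ℕ) * t^n) t := by
    simpa using hasDerivAt_pow (n+1) t
  have hlog : HasDerivAt Real.log t⁻¹ t := Real.hasDerivAt_log ht.ne'
  have h2 : HasDerivAt (fun t : ℝ => Real.log t^2) (2 * Real.log t ^ 1 * t⁻¹) t := by
    simpa using hlog.fun_pow 2
  have h3 : HasDerivAt (fun t : ℝ => Real.log t^2/((n:ℝ)+1) - 2*Real.log t/((n:ℝ)+1)^2 + 2/((n:ℝ)+1)^3)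
      ((2 * Real.log t ^ 1 * t⁻¹)/((n:ℝ)+1) - 2*t⁻¹/((n:ℝ)+1)^2) t :=
    ((h2.div_const _).sub ((hlog.const_mul 2).div_const _)).add_const _
  have := h1.fun_mul h3
  refine this.congr_deriv ?_
  have htne : t ≠ 0 := ht.ne'
  have hc : ((n:ℝ)+1) ≠ 0 := by positivity
  field_simp
  push_cast
  ring

lemma Faux_tendsto (n : ℕ) : Tendsto (Faux n) (nhdsWithin 0 (Ioi (0:ℝ))) (nhds 0) := by
  have hr2 : (0:ℝ) < ((n:ℝ)+1)/2 := by positivity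
  have hr1 : (0:ℝ) < ((n:ℝ)+1) := by positivity
  have A : Tendsto (fun t : ℝ => Real.log t * t ^ (((n:ℝ)+1)/2)) (nhdsWithin 0 (Ioi (0:ℝ))) (nhds 0) :=
    tendsto_log_mul_rpow_nhdsGT_zero hr2
  have A2 : Tendsto (fun t : ℝ => (Real.log t * t ^ (((n:ℝ)+1)/2))^2) (nhdsWithin 0 (Ioi (0:ℝ))) (nhds 0) := by
    simpa using A.pow 2
  have B : Tendsto (fun t : ℝ => Real.log t * t ^ ((n:ℝ)+1)) (nhdsWithin 0 (Ioi (0:ℝ))) (nhds 0) :=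
    tendsto_log_mul_rpow_nhdsGT_zero hr1
  have C : Tendsto (fun t : ℝ => t^(n+1)) (nhdsWithin 0 (Ioi (0:ℝ))) (nhds 0) := by
    have : Tendsto (fun t : ℝ => t^(n+1)) (nhds 0) (nhds ((0:ℝ)^(n+1))) :=
      (continuous_pow (n+1)).tendsto 0
    rw [zero_pow (Nat.succ_ne_zero n)] at this
    exact this.mono_left nhdsWithin_le_nhds
  have hA2' : Tendsto (fun t : ℝ => t^(n+1) * Real.log t^2) (nhdsWithin 0 (Ioi (0:ℝ))) (nhds 0) := by
    apply A2.congr'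
    filter_upwards [eventually_mem_nhdsWithin] with t (ht : t ∈ Ioi (0:ℝ))
    have ht0 : (0:ℝ) < t := ht
    rw [mul_pow, ← Real.rpow_natCast (t ^ (((n:ℝ)+1)/2)) 2, ← Real.rpow_mul ht0.le,
      ← Real.rpow_natCast t (n+1)]
    push_cast
    ring_nf
  have hB' : Tendsto (fun t : ℝ => t^(n+1) * Real.log t) (nhdsWithin 0 (Ioi (0:ℝ))) (nhds 0) := by
    apply B.congr'
    filter_upwards [eventually_mem_nhdsWithin] with t (ht : t ∈ Ioi (0:ℝ))
    have ht0 : (0:ℝ) < t := ht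
    rw [← Real.rpow_natCast t (n+1)]
    push_cast
    ring
  have : Tendsto (fun t : ℝ => (t^(n+1) * Real.log t^2)/((n:ℝ)+1)
      - 2*(t^(n+1) * Real.log t)/((n:ℝ)+1)^2 + t^(n+1)*(2/((n:ℝ)+1)^3))
      (nhdsWithin 0 (Ioi (0:ℝ))) (nhds (0/((n:ℝ)+1) - 2*0/((n:ℝ)+1)^2 + 0*(2/((n:ℝ)+1)^3))) :=
    ((hA2'.div_const _).sub ((hB'.const_mul 2).div_const _)).add (C.mul_const _)
  simp only [zero_div, mul_zero, zero_mul, sub_zero, add_zero, zero_sub, neg_zero] at this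
  apply this.congr
  intro t
  simp only [Faux]
  ring

lemma Faux_cont (n : ℕ) : ContinuousOn (Faux n) (Icc 0 1) := by
  intro x hx
  rcases eq_or_ne x 0 with rfl | hne
  · have hsub : Icc (0:ℝ) 1 ⊆ {0} ∪ Ioi 0 := by
      intro y hy
      rcases eq_or_lt_of_le hy.1 with h | h
      · exact Or.inl (by simp [← h])
      · exact Or.inr h
    refine ContinuousWithinAt.mono ?_ hsub
    unfold ContinuousWithinAt
    rw [nhdsWithin_union, Faux_zero]
    refine Tendsto.sup ?_ (Faux_tendsto n)
    rw [nhdsWithin_singleton]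
    simpa [Faux_zero] using tendsto_pure_nhds (Faux n) 0
  · have hx0 : 0 < x := lt_of_le_of_ne hx.1 (Ne.symm hne)
    refine ContinuousAt.continuousWithinAt ?_
    have hl : ContinuousAt Real.log x := Real.continuousAt_log hne
    unfold Faux
    exact (continuousAt_pow _ _).mul
      ((((hl.pow 2).div_const _).sub ((continuousAt_const.mul hl).div_const _)).add continuousAt_const)

lemma L1int (n : ℕ) : IntegrableOn (fun t : ℝ => t^n * Real.log t^2) (Ioo 0 1) volume := by
  refine (intervalIntegral.integrableOn_deriv_of_nonneg (Faux_cont n)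
    (fun x hx => Faux_deriv n hx.1) ?_).mono_set Ioo_subset_Ioc_self
  exact fun x hx => mul_nonneg (pow_nonneg hx.1.le n) (sq_nonneg _)

lemma L1val (n : ℕ) : ∫ t in Ioo (0:ℝ) 1, t^n * Real.log t^2 = 2/((n:ℝ)+1)^3 := by
  have hii : IntervalIntegrable (fun t : ℝ => t^n * Real.log t^2) volume 0 1 := by
    rw [intervalIntegrable_iff_integrableOn_Ioo_of_le zero_le_one]
    exact L1int n
  have := intervalIntegral.integral_eq_sub_of_hasDeriv_right_of_le zero_le_one (Faux_cont n)
    (fun x hx => (Faux_deriv n hx.1).hasDerivWithinAt) hii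
  rw [Faux_one, Faux_zero, sub_zero] at this
  rw [← this, intervalIntegral.integral_of_le zero_le_one, integral_Ioc_eq_integral_Ioo]


lemma hasSum_aux {t : ℝ} (ht0 : 0 < t) (ht1 : t < 1) :
    HasSum (fun n : ℕ => ((n:ℝ)+1) * (t^n * Real.log t^2)) (Real.log t^2/(1-t)^2) := by
  have h1t : (1:ℝ) - t ≠ 0 := by intro h; apply absurd ht1; linarith [sub_eq_zero.mp h]
  have hg : HasSum (fun n : ℕ => t^n) ((1-t)⁻¹) := hasSum_geometric_of_lt_one ht0.le ht1
  have hn : HasSum (fun n : ℕ => (n:ℝ) * t^n) (t/(1-t)^2) :=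
    hasSum_coe_mul_geometric_of_norm_lt_one (by rw [Real.norm_eq_abs, abs_of_pos ht0]; exact ht1)
  have hsum : HasSum (fun n : ℕ => ((n:ℝ)+1) * t^n) (1/(1-t)^2) := by
    have heq : (fun n : ℕ => ((n:ℝ)+1) * t^n) = fun n : ℕ => (n:ℝ)*t^n + t^n := by
      funext n; ring
    rw [heq]
    convert hn.add hg using 1
    field_simp
    ring
  have h2 := hsum.mul_left (Real.log t^2)
  have heq2 : (fun n : ℕ => Real.log t^2 * (((n:ℝ)+1) * t^n))
      = fun n : ℕ => ((n:ℝ)+1) * (t^n * Real.log t^2) := by funext n; ring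
  rw [heq2] at h2
  convert h2 using 1
  · rfl
  ring

lemma Fint (n : ℕ) : IntegrableOn (fun t : ℝ => ((n:ℝ)+1) * (t^n * Real.log t^2)) (Ioo 0 1) volume :=
  (L1int n).const_mul _

lemma Fnorm (n : ℕ) :
    ∫ t in Ioo (0:ℝ) 1, ‖((n:ℝ)+1) * (t^n * Real.log t^2)‖ = 2/((n:ℝ)+1)^2 := by
  have hc : ((n:ℝ)+1) ≠ 0 := by positivity
  have h1 : ∫ t in Ioo (0:ℝ) 1, ‖((n:ℝ)+1) * (t^n * Real.log t^2)‖
      = ∫ t in Ioo (0:ℝ) 1, ((n:ℝ)+1) * (t^n * Real.log t^2) := by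
    apply setIntegral_congr_fun measurableSet_Ioo
    intro t ht
    exact Real.norm_of_nonneg
      (mul_nonneg (by positivity) (mul_nonneg (pow_nonneg ht.1.le n) (sq_nonneg _)))
  rw [h1, integral_const_mul, L1val]
  field_simp

lemma sumval : HasSum (fun n : ℕ => 2/((n:ℝ)+1)^2) (π^2/3) := by
  have h : HasSum (fun n : ℕ => (1:ℝ) / (n:ℝ) ^ 2) (π^2/6) := hasSum_zeta_two
  have h2 : HasSum (fun n : ℕ => (1:ℝ)/((n+1:ℕ):ℝ)^2)
      (π^2/6 - ∑ i ∈ Finset.range 1, (1:ℝ)/(i:ℝ)^2) := (hasSum_nat_add_iff' 1).mpr h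
  have e0 : (π^2/6 - ∑ i ∈ Finset.range 1, (1:ℝ)/(i:ℝ)^2) = π^2/6 := by simp
  rw [e0] at h2
  have h1 : HasSum (fun n : ℕ => (1:ℝ) / ((n:ℝ)+1) ^ 2) (π^2/6) := by
    convert h2 using 2 with n
    push_cast
    ring
  have h3 := h1.mul_left 2
  have e1 : (fun n : ℕ => 2 * ((1:ℝ)/((n:ℝ)+1)^2)) = fun n : ℕ => 2/((n:ℝ)+1)^2 := by
    funext n; rw [mul_one_div]
  rw [e1] at h3
  have e2 : (2:ℝ) * (π^2/6) = π^2/3 := by ring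
  rwa [e2] at h3

lemma ssum : Summable (fun n : ℕ => ∫ t in Ioo (0:ℝ) 1, ‖((n:ℝ)+1) * (t^n * Real.log t^2)‖) := by
  apply Summable.congr sumval.summable
  intro n
  rw [Fnorm]

lemma L3 : ∫ t in Ioo (0:ℝ) 1, Real.log t^2/(1-t)^2 = π^2/3 := by
  have key := integral_tsum_of_summable_integral_norm (μ := volume.restrict (Ioo (0:ℝ) 1))
    (F := fun (n:ℕ) (t:ℝ) => ((n:ℝ)+1) * (t^n * Real.log t^2)) Fint ssum
  have h1 : (∫ t in Ioo (0:ℝ) 1, ∑' n : ℕ, ((n:ℝ)+1) * (t^n * Real.log t^2))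
      = ∫ t in Ioo (0:ℝ) 1, Real.log t^2/(1-t)^2 := by
    apply setIntegral_congr_fun measurableSet_Ioo
    intro t ht
    exact (hasSum_aux ht.1 ht.2).tsum_eq
  have h2 : (∑' n : ℕ, ∫ t in Ioo (0:ℝ) 1, ((n:ℝ)+1) * (t^n * Real.log t^2)) = π^2/3 := by
    have : ∀ n : ℕ, (∫ t in Ioo (0:ℝ) 1, ((n:ℝ)+1) * (t^n * Real.log t^2)) = 2/((n:ℝ)+1)^2 := by
      intro n
      have hc : ((n:ℝ)+1) ≠ 0 := by positivity
      rw [integral_const_mul, L1val]; field_simp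
    rw [tsum_congr this, sumval.tsum_eq]
  have key' : (∑' n : ℕ, ∫ t in Ioo (0:ℝ) 1, ((n:ℝ)+1) * (t^n * Real.log t^2))
      = ∫ t in Ioo (0:ℝ) 1, ∑' n : ℕ, ((n:ℝ)+1) * (t^n * Real.log t^2) := key
  rw [← h1, ← key', h2]


lemma L2 : IntegrableOn (fun t : ℝ => Real.log t^2/(1-t)^2) (Ioo 0 1) volume := by
  have hmeas : AEStronglyMeasurable (fun t : ℝ => Real.log t^2/(1-t)^2)
      (volume.restrict (Ioo 0 1)) := by
    apply ContinuousOn.aestronglyMeasurable _ measurableSet_Ioo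
    apply ContinuousOn.div
    · refine (Real.continuousOn_log.mono ?_).pow 2
      intro x hx
      simp [hx.1.ne']
    · exact ((continuous_const.sub continuous_id).pow 2).continuousOn
    · intro x hx
      exact pow_ne_zero 2 (sub_pos.mpr hx.2).ne'
  have h0 := L1int 0
  simp only [pow_zero, one_mul] at h0
  have hb : IntegrableOn (fun t : ℝ => 4 + 4*Real.log t^2) (Ioo (0:ℝ) 1) volume := by
    refine (integrableOn_const (by simp [Real.volume_Ioo])).add (h0.const_mul 4)
  refine Integrable.mono hb hmeas ?_
  rw [ae_restrict_iff' measurableSet_Ioo]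
  refine ae_of_all _ ?_
  intro t ht
  have ht0 : (0:ℝ) < t := ht.1
  have ht1 : t < 1 := ht.2
  have h1t : (0:ℝ) < 1 - t := by linarith
  have hg0 : 0 ≤ Real.log t^2/(1-t)^2 := by positivity
  rw [Real.norm_of_nonneg hg0, Real.norm_of_nonneg (by positivity : (0:ℝ) ≤ 4 + 4*Real.log t^2)]
  rcases le_or_gt t (1/2) with hc | hc
  · have h14 : (1/4 : ℝ) ≤ (1-t)^2 := by nlinarith
    rw [div_le_iff₀ (by positivity)]
    nlinarith [sq_nonneg (Real.log t)]
  · have hlog := Real.log_le_sub_one_of_pos (show (0:ℝ) < t⁻¹ by positivity)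
    rw [Real.log_inv] at hlog
    have h1 : -Real.log t * t ≤ 1 - t := by
      have := mul_le_mul_of_nonneg_right hlog ht0.le
      calc -Real.log t * t ≤ (t⁻¹ - 1) * t := this
        _ = 1 - t := by field_simp
    have h2 : (0:ℝ) ≤ -Real.log t := by
      simp only [neg_nonneg]
      exact Real.log_nonpos ht0.le ht1.le
    have h5 : (-Real.log t * t)^2 ≤ (1-t)^2 :=
      pow_le_pow_left₀ (mul_nonneg h2 ht0.le) h1 2
    rw [div_le_iff₀ (by positivity)]
    nlinarith [sq_nonneg (Real.log t), sq_nonneg (Real.log t * (1-t)), h5, hc]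

noncomputable def φf (t : ℝ) : ℝ := (1-t)/(1+t)

lemma φf_mem {t : ℝ} (ht : t ∈ Ioo (0:ℝ) 1) : φf t ∈ Ioo (0:ℝ) 1 := by
  obtain ⟨h0, h1⟩ := ht
  constructor
  · show (0:ℝ) < (1-t)/(1+t)
    apply div_pos <;> linarith
  · show (1-t)/(1+t) < 1
    rw [div_lt_one (by linarith)]
    linarith

lemma aux_split {t : ℝ} (h0 : 0 < t) (h1 : t < 1) :
    (1:ℝ) + (1-t)/(1+t) = 2/(1+t) ∧ (1:ℝ) - (1-t)/(1+t) = 2*t/(1+t) := by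
  have hne : (1:ℝ) + t ≠ 0 := by positivity
  constructor
  · field_simp
    ring
  · field_simp
    ring

lemma φf_invol {t : ℝ} (ht : t ∈ Ioo (0:ℝ) 1) : φf (φf t) = t := by
  obtain ⟨h0, h1⟩ := ht
  have hne : (1:ℝ) + t ≠ 0 := by positivity
  obtain ⟨hx, hy⟩ := aux_split h0 h1
  show (1 - (1-t)/(1+t))/(1 + (1-t)/(1+t)) = t
  rw [hx, hy]
  rw [div_div_div_eq]
  field_simp

lemma φf_image : φf '' (Ioo 0 1) = Ioo (0:ℝ) 1 := by
  ext y
  constructor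
  · rintro ⟨t, ht, rfl⟩
    exact φf_mem ht
  · intro hy
    exact ⟨φf y, φf_mem hy, φf_invol hy⟩

lemma φf_inj : InjOn φf (Ioo (0:ℝ) 1) := by
  intro a ha b hb h
  have := congrArg φf h
  rwa [φf_invol ha, φf_invol hb] at this

lemma φf_deriv {t : ℝ} (ht : t ∈ Ioo (0:ℝ) 1) :
    HasDerivWithinAt φf (-2/(1+t)^2) (Ioo (0:ℝ) 1) t := by
  have hne : (1:ℝ) + t ≠ 0 := by have := ht.1; positivity
  have h := ((hasDerivAt_const t (1:ℝ)).sub (hasDerivAt_id t)).div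
      ((hasDerivAt_const t (1:ℝ)).add (hasDerivAt_id t)) hne
  have h' : HasDerivAt φf (((0-1) * (1+t) - (1-t) * (0+1))/(1+t)^2) t := h
  have e : ((0-1) * (1+t) - (1-t) * (0+1))/(1+t)^2 = -2/(1+t)^2 := by
    ring_nf
  rw [e] at h'
  exact h'.hasDerivWithinAt

lemma key_eq {t : ℝ} (ht : t ∈ Ioo (0:ℝ) 1) :
    |(-2/(1+t)^2)| • ((1/(2*(φf t))) * Real.log ((1+φf t)/(1-φf t)))^2
      = (1/2) * (Real.log t^2/(1-t)^2) := by
  obtain ⟨h0, h1⟩ := ht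
  have hne : (1:ℝ) + t ≠ 0 := by positivity
  have h1t : (0:ℝ) < 1 - t := by linarith
  obtain ⟨hx, hy⟩ := aux_split h0 h1
  have harg : (1 + φf t)/(1 - φf t) = 1/t := by
    show (1 + (1-t)/(1+t))/(1 - (1-t)/(1+t)) = 1/t
    rw [hx, hy, div_div_div_eq]
    rw [div_eq_div_iff (by positivity) h0.ne']
    ring
  have habs : |(-2/(1+t)^2)| = 2/(1+t)^2 := by
    rw [abs_of_neg (div_neg_of_neg_of_pos (by norm_num) (by positivity))]
    ring
  have hlog1 : Real.log (1/t) = -Real.log t := by rw [one_div, Real.log_inv]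
  rw [harg, hlog1, habs, smul_eq_mul]
  have hφ : φf t = (1-t)/(1+t) := rfl
  rw [hφ]
  have hφne : (1-t)/(1+t) ≠ 0 := by positivity
  field_simp

open Real Set MeasureTheory

/-- the function `μ ↦ ((1/(2μ)) log((1+μ)/(1−μ)))²` is integrable on `(0,1)`
and its integral equals `π²/6` (the blowup time `T_e`). -/
theorem statement16 :
    IntegrableOn (fun μ : ℝ => ((1 / (2*μ)) * Real.log ((1+μ) / (1-μ))) ^ 2)
      (Ioo (0:ℝ) 1) volume ∧
    (∫ μ in Ioo (0:ℝ) 1, ((1 / (2*μ)) * Real.log ((1+μ) / (1-μ))) ^ 2) = π ^ 2 / 6 := by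
  constructor
  · rw [← φf_image, integrableOn_image_iff_integrableOn_abs_deriv_smul measurableSet_Ioo
      (fun t ht => φf_deriv ht) φf_inj]
    exact IntegrableOn.congr_fun (L2.const_mul (1/2)) (fun t ht => (key_eq ht).symm)
      measurableSet_Ioo
  · rw [← φf_image, integral_image_eq_integral_abs_deriv_smul measurableSet_Ioo
      (fun t ht => φf_deriv ht) φf_inj]
    rw [setIntegral_congr_fun measurableSet_Ioo (fun t ht => key_eq ht)]
    rw [integral_const_mul, L3]
    ring
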